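/- Let (a,b) ∈ 𝒫 with −1 ≤ a < 0 and b ≥ 1. Then there exist an integer N ≥ 1 and a real γ > 1 such that for every x ∈ (a,b) at which the N-th iterate f̂_{a,b}^N is differentiable, |(f̂_{a,b}^N)′(x)| ≥ γ. -/

import Mathlib

open MeasureTheory Filter Set

noncomputable section

/-- The parameter set 𝒫 = {(a,b) : a ≤ 0 ≤ b, b − a ≥ 1, −ab ≤ 1}. -/
def memP (a b : ℝ) : Prop := a ≤ 0 ∧ 0 ≤ b ∧ 1 ≤ b - a ∧ -(a * b) ≤ 1

/-- Generalized integer part ⌊x⌉_{a,b}. -/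
def genFloor (a b x : ℝ) : ℤ :=
  if x < a then ⌊x - a⌋ else if x < b then 0 else ⌊x - b⌋ + 1

/-- Iterates x_k of the (a,b)-continued fraction algorithm. -/
def cfIter (a b x : ℝ) : ℕ → ℝ
  | 0 => x
  | k + 1 => -1 / (cfIter a b x k - (genFloor a b (cfIter a b x k) : ℝ))

/-- The digits n_k(x) of the (a,b)-continued fraction expansion. -/
def digit (a b x : ℝ) (k : ℕ) : ℤ := genFloor a b (cfIter a b x k)

/-- Evaluation of a finite "minus" continued fraction n₀ − 1/(n₁ − 1/(⋯ − 1/n_k)). -/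
def mcfEval : List ℤ → ℝ
  | [] => 0
  | [n] => (n : ℝ)
  | n :: l => (n : ℝ) - 1 / mcfEval l

/-- The k-th convergent r_k(x) of the (a,b)-continued fraction expansion. -/
def convergent (a b x : ℝ) (k : ℕ) : ℝ :=
  mcfEval ((List.range (k + 1)).map fun i => digit a b x i)

/-- The natural extension map F_{a,b}. -/
def Fab (a b : ℝ) (p : ℝ × ℝ) : ℝ × ℝ :=
  if p.2 < a then (p.1 + 1, p.2 + 1)
  else if p.2 < b then (-1 / p.1, -1 / p.2)
  else (p.1 - 1, p.2 - 1)

/-- The attractor D_{a,b} = ⋂ₙ F_{a,b}ⁿ(ℝ² ∖ Δ). -/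
def Dab (a b : ℝ) : Set (ℝ × ℝ) :=
  ⋂ n : ℕ, (Fab a b)^[n] '' {p : ℝ × ℝ | p.1 ≠ p.2}

/-- Λ_{a,b} = {(−1/u, −1/w) : (u,w) ∈ D_{a,b}, a ≤ w ≤ b}. -/
def Lam (a b : ℝ) : Set (ℝ × ℝ) :=
  {q | ∃ p ∈ Dab a b, a ≤ p.2 ∧ p.2 ≤ b ∧ q = (-1 / p.1, -1 / p.2)}

/-- The reduction map R_{a,b}(u,w) = (−1/(u−n), −1/(w−n)), n = n₀(w). -/
def Rab (a b : ℝ) (p : ℝ × ℝ) : ℝ × ℝ :=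
  (-1 / (p.1 - (genFloor a b p.2 : ℝ)), -1 / (p.2 - (genFloor a b p.2 : ℝ)))

/-- The map f_{a,b}. -/
def fab (a b x : ℝ) : ℝ :=
  if x < a then x + 1 else if x < b then -1 / x else x - 1

/-- A forward orbit being eventually periodic. -/
def EvPer (g : ℝ → ℝ) (x : ℝ) : Prop := ∃ i j : ℕ, i < j ∧ g^[i] x = g^[j] x

/-- The finiteness condition for the pair (a,b). -/
def FinenessCondition (a b : ℝ) : Prop :=
  ((EvPer (fab a b) (-1 / a) ∧ EvPer (fab a b) (a + 1)) ∨
    ∃ m k : ℕ, (fab a b)^[m] (-1 / a) = (fab a b)^[k] (a + 1)) ∧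
  ((EvPer (fab a b) (b - 1) ∧ EvPer (fab a b) (-1 / b)) ∨
    ∃ m k : ℕ, (fab a b)^[m] (b - 1) = (fab a b)^[k] (-1 / b))

/-- The measure ρ with density 1/(w−u)² w.r.t. Lebesgue measure du dw. -/
def rho : Measure (ℝ × ℝ) :=
  volume.withDensity fun p => ENNReal.ofReal (1 / (p.2 - p.1) ^ 2)

/-- An orbit (u_k, w_k) in Λ_{a,b} realizing a bi-infinite coding sequence (n_k). -/
def IsCodingOrbit (a b : ℝ) (n : ℤ → ℤ) (u w : ℤ → ℝ) : Prop :=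
  (∀ k, (u k, w k) ∈ Lam a b) ∧ (∀ k, Irrational (w k)) ∧
  (∀ k, n k = genFloor a b (w k)) ∧
  (∀ k : ℤ, u (k + 1) = -1 / (u k - (n k : ℝ)) ∧ w (k + 1) = -1 / (w k - (n k : ℝ)))

/-- Admissible coding sequences. -/
def Admissible (a b : ℝ) (n : ℤ → ℤ) : Prop :=
  (∀ k, n k ≠ 0) ∧ ∃ u w : ℤ → ℝ, IsCodingOrbit a b n u w

/-- The reflection ψ(x,y) = (−y,−x). -/
def psi (p : ℝ × ℝ) : ℝ × ℝ := (-p.2, -p.1)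

/-- (a′,b′) is dual to (a,b) if ψ(D_{a,b}) = D_{a′,b′}. -/
def IsDual (a b a' b' : ℝ) : Prop := psi '' Dab a b = Dab a' b'

/-- The Gauss-type map f̂_{a,b}. -/
def fhat (a b x : ℝ) : ℝ :=
  if x = 0 then 0 else -1 / x - (genFloor a b (-1 / x) : ℝ)

/-- The natural extension F̂_{a,b} of the Gauss-type map. -/
def Fhat (a b : ℝ) (p : ℝ × ℝ) : ℝ × ℝ :=
  (fhat a b p.1, -1 / (p.2 - (genFloor a b (-1 / p.1) : ℝ)))

/-- Λ̂_{a,b} = {(−1/w, u) : (u,w) ∈ Λ_{a,b}}. -/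
def LamHat (a b : ℝ) : Set (ℝ × ℝ) := {q | ∃ p ∈ Lam a b, q = (-1 / p.2, p.1)}

/-- The normalizing constant K_{a,b} = ∫_{Λ̂_{a,b}} dx dy/(1+xy)². -/
def Kab (a b : ℝ) : ENNReal :=
  ∫⁻ p in LamHat a b, ENNReal.ofReal (1 / (1 + p.1 * p.2) ^ 2)

/-- The invariant probability measure ν_{a,b} of F̂_{a,b}. -/
def nuab (a b : ℝ) : Measure (ℝ × ℝ) :=
  (Kab a b)⁻¹ •
    ((volume.restrict (LamHat a b)).withDensity fun p => ENNReal.ofReal (1 / (1 + p.1 * p.2) ^ 2))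

/-- The invariant probability measure μ_{a,b} of f̂_{a,b}: pushforward of ν_{a,b} by (x,y) ↦ x. -/
def muab (a b : ℝ) : Measure ℝ := (nuab a b).map Prod.fst

/-- Denominators of the convergents, shifted by one: qden 0 = q₋₁ = 0, qden (k+1) = q_k. -/
def qden (a b x : ℝ) : ℕ → ℤ
  | 0 => 0
  | 1 => 1
  | k + 2 => digit a b x (k + 1) * qden a b x (k + 1) - qden a b x k

/-- The sequence c_p: cseq b (p−1) = c_p, so c₁ = b−1 and c_{p+1} = −1/c_p − 2. -/
def cseq (b : ℝ) : ℕ → ℝ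
  | 0 => b - 1
  | p + 1 => -1 / cseq b p - 2

/-- The function h⁺_{a,b}. -/
def hplus (a b : ℝ) (m : ℕ) (x : ℝ) : ℝ :=
  (∑ p ∈ Finset.Icc 1 (m - 1),
    Set.indicator (Set.Ico (cseq b (p - 1)) (cseq b p)) (fun t => 1 / (t + ((p : ℝ) + 1) / p)) x)
  + Set.indicator (Set.Ico (cseq b (m - 1)) (-1 / a - 1)) (fun t => 1 / (t + ((m : ℝ) + 1) / m)) x
  + Set.indicator (Set.Ico (-1 / a - 1) b) (fun t => 1 / (t + 1)) x

/-- The function h⁻_{a,b}. -/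
def hminus (a b : ℝ) (m : ℕ) (x : ℝ) : ℝ :=
  Set.indicator (Set.Ico a (-1 / b + m)) (fun t => 1 / ((m : ℝ) - t)) x
  + Set.indicator (Set.Ico (-1 / b + m) (a + 1)) (fun t => 1 / ((m : ℝ) + 1 - t)) x

section ExpHelpers
variable {a b : ℝ}

lemma fhat_zero : fhat a b 0 = 0 := by simp [fhat]

lemma fhat_ne {x : ℝ} (hx : x ≠ 0) :
    fhat a b x = -1 / x - (genFloor a b (-1 / x) : ℝ) := by simp [fhat, hx]

lemma gf_neg {y : ℝ} (h : y < a) : genFloor a b y = ⌊y - a⌋ := by simp [genFloor, h]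

lemma gf_mid {y : ℝ} (h1 : a ≤ y) (h2 : y < b) : genFloor a b y = 0 := by
  simp [genFloor, not_lt.2 h1, h2]

lemma gf_pos {y : ℝ} (h1 : a ≤ y) (h2 : b ≤ y) : genFloor a b y = ⌊y - b⌋ + 1 := by
  simp [genFloor, not_lt.2 h1, not_lt.2 h2]

-- branch for negative x
lemma branch_neg (ha1 : -1 ≤ a) (ha : a < 0) (hb : 1 ≤ b) (hab : -(a*b) ≤ 1)
    {x : ℝ} (hax : a ≤ x) (hx : x < 0) :
    b ≤ -1/x ∧ 1 ≤ genFloor a b (-1/x) ∧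
      fhat a b x = -1/x - (genFloor a b (-1/x) : ℝ) ∧
      b - 1 ≤ fhat a b x ∧ fhat a b x < b := by
  have hxne : x ≠ 0 := ne_of_lt hx
  have hbx : b ≤ -1/x := by
    rw [le_div_iff_of_neg hx]
    nlinarith
  have hay : a ≤ -1/x := by nlinarith [hbx]
  have hgf : genFloor a b (-1/x) = ⌊-1/x - b⌋ + 1 := gf_pos hay hbx
  have hfl : (0:ℤ) ≤ ⌊-1/x - b⌋ := Int.floor_nonneg.2 (by linarith)
  have hfr1 : (⌊-1/x - b⌋ : ℝ) ≤ -1/x - b := Int.floor_le _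
  have hfr2 : -1/x - b < (⌊-1/x - b⌋ : ℝ) + 1 := Int.lt_floor_add_one _
  refine ⟨hbx, by omega, fhat_ne hxne, ?_, ?_⟩ <;>
    · rw [fhat_ne hxne, hgf]; push_cast; linarith

-- branch for positive x
lemma branch_pos (ha1 : -1 ≤ a) (ha : a < 0) (hb : 1 ≤ b) (hab : -(a*b) ≤ 1)
    {x : ℝ} (hx : 0 < x) (hxb : x < b) :
    -1/x < a ∧ genFloor a b (-1/x) ≤ -1 ∧
      fhat a b x = -1/x - (genFloor a b (-1/x) : ℝ) ∧
      a ≤ fhat a b x ∧ fhat a b x < a + 1 := by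
  have hxne : x ≠ 0 := ne_of_gt hx
  have hya : -1/x < a := by
    rw [div_lt_iff₀ hx]
    nlinarith
  have hgf : genFloor a b (-1/x) = ⌊-1/x - a⌋ := gf_neg hya
  have hfl : ⌊-1/x - a⌋ < 0 := Int.floor_lt.2 (by push_cast; linarith)
  have hfr1 : (⌊-1/x - a⌋ : ℝ) ≤ -1/x - a := Int.floor_le _
  have hfr2 : -1/x - a < (⌊-1/x - a⌋ : ℝ) + 1 := Int.lt_floor_add_one _
  refine ⟨hya, by omega, fhat_ne hxne, ?_, ?_⟩ <;>
    · rw [fhat_ne hxne, hgf]; linarith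

lemma fhat_mem (ha1 : -1 ≤ a) (ha : a < 0) (hb : 1 ≤ b) (hab : -(a*b) ≤ 1)
    {x : ℝ} (hx : x ∈ Ico a b) : fhat a b x ∈ Ico a b := by
  rcases lt_trichotomy x 0 with h | h | h
  · obtain ⟨_, _, _, h1, h2⟩ := branch_neg ha1 ha hb hab hx.1 h
    exact ⟨by linarith, h2⟩
  · rw [h, fhat_zero]; exact ⟨le_of_lt ha, by linarith⟩
  · obtain ⟨_, _, _, h1, h2⟩ := branch_pos ha1 ha hb hab h hx.2
    exact ⟨h1, by linarith⟩

lemma orbit_mem (ha1 : -1 ≤ a) (ha : a < 0) (hb : 1 ≤ b) (hab : -(a*b) ≤ 1)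
    {x : ℝ} (hx : x ∈ Ico a b) (k : ℕ) : (fhat a b)^[k] x ∈ Ico a b := by
  induction k with
  | zero => simpa
  | succ n ih => rw [Function.iterate_succ_apply']; exact fhat_mem ha1 ha hb hab ih

lemma pair_bound (ha1 : -1 ≤ a) (ha : a < 0) (hb : 1 ≤ b) (hab : -(a*b) ≤ 1)
    {x : ℝ} (hax : a ≤ x) (hx : x < 0) :
    |x * fhat a b x| ≤ b / (b + 1) := by
  obtain ⟨hbx, hn1, heq, hy1, hy2⟩ := branch_neg ha1 ha hb hab hax hx
  set y := fhat a b x with hy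
  set n := genFloor a b (-1/x) with hn
  have hy0 : 0 ≤ y := by linarith
  have hx0 : x ≠ 0 := ne_of_lt hx
  have hprod : x * y = -1 - (n:ℝ) * x := by
    rw [heq]; field_simp
  have hxy_le : x * y ≤ 0 := mul_nonpos_of_nonpos_of_nonneg (le_of_lt hx) hy0
  have habs : |x * y| = -(x * y) := abs_of_nonpos hxy_le
  have hnx : (n:ℝ) * (-x) ≥ -x := by
    have : (1:ℝ) ≤ (n:ℝ) := by exact_mod_cast hn1
    nlinarith
  -- |x*y| = 1 + n*x = 1 - n*(-x) ≤ 1 - (-x)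
  have hb1 : |x * y| ≤ 1 + x := by rw [habs, hprod]; nlinarith
  have hb2 : |x * y| ≤ (-x) * b := by
    rw [habs]
    have : -(x*y) = (-x) * y := by ring
    rw [this]
    exact mul_le_mul_of_nonneg_left (le_of_lt hy2) (by linarith)
  rcases le_or_gt (-x) (1/(b+1)) with h | h
  · calc |x*y| ≤ (-x) * b := hb2
      _ ≤ (1/(b+1)) * b := mul_le_mul_of_nonneg_right h (by linarith)
      _ = b / (b+1) := by ring
  · have h' : 1 < -x * (b+1) := by
      rw [div_lt_iff₀ (by linarith : (0:ℝ) < b + 1)] at h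
      linarith
    have : 1 + x < b/(b+1) := by
      rw [lt_div_iff₀ (by linarith : (0:ℝ) < b + 1)]
      nlinarith
    linarith
def cconst (a b : ℝ) : ℝ := max (b / (b+1)) (a + 1)

lemma cconst_lt_one (ha : a < 0) (hb : 1 ≤ b) : cconst a b < 1 :=
  max_lt (by rw [div_lt_one (by linarith)]; linarith) (by linarith)

lemma cconst_pos (hb : 1 ≤ b) : 0 < cconst a b :=
  lt_max_of_lt_left (by positivity)

lemma prod_peel (g : ℕ → ℝ) (N : ℕ) :
    ∏ k ∈ Finset.range (N+1), g k = (∏ k ∈ Finset.range N, g (k+1)) * g 0 :=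
  Finset.prod_range_succ' g N

lemma CM (ha1 : -1 ≤ a) (ha : a < 0) (hb : 1 ≤ b) (hab : -(a*b) ≤ 1) :
    ∀ N : ℕ, ∀ x : ℝ, a ≤ x → x < a + 1 →
    (∀ k < N, (fhat a b)^[k] x ≠ 0) →
    ∏ k ∈ Finset.range N, |(fhat a b)^[k] x| ≤ (cconst a b) ^ (N / 2) := by
  intro N
  induction N using Nat.strong_induction_on with
  | _ N IH =>
  intro x hax hx1 horb
  have hc0 : 0 ≤ cconst a b := le_of_lt (cconst_pos hb)
  have hc1 : cconst a b ≤ 1 := le_of_lt (cconst_lt_one ha hb)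
  match N with
  | 0 => simp
  | 1 =>
    simp only [Finset.prod_range_one, Function.iterate_zero_apply, pow_zero]
    rw [abs_le]; constructor <;> nlinarith
  | (M+2) =>
    have hx0 : x ≠ 0 := by simpa using horb 0 (by omega)
    have hxb : x < b := by linarith
    rcases lt_or_gt_of_ne hx0 with hneg | hpos
    · -- x < 0 : two steps
      set y := fhat a b x with hy
      have hy0 : y ≠ 0 := by
        have := horb 1 (by omega); simpa [Function.iterate_one] using this
      obtain ⟨_, _, _, hy1, hy2⟩ := branch_neg ha1 ha hb hab hax hneg
      have hypos : 0 < y := lt_of_le_of_ne (by linarith) (Ne.symm hy0)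
      set z := fhat a b y with hz
      obtain ⟨_, _, _, hz1, hz2⟩ := branch_pos ha1 ha hb hab hypos (by linarith)
      have hzorb : ∀ k < M, (fhat a b)^[k] z ≠ 0 := by
        intro k hk
        have := horb (k+2) (by omega)
        rwa [show k+2 = k+1+1 by ring, Function.iterate_succ_apply,
          Function.iterate_succ_apply] at this
      have hrec := IH M (by omega) z hz1 hz2 hzorb
      have hpeel : ∏ k ∈ Finset.range (M+2), |(fhat a b)^[k] x|
          = (∏ k ∈ Finset.range M, |(fhat a b)^[k] z|) * (|y| * |x|) := by
        rw [prod_peel, prod_peel (fun k => |(fhat a b)^[k+1] x|) M]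
        simp only [Function.iterate_zero_apply, Function.iterate_one]
        rw [mul_assoc]
        simp only [Function.iterate_succ_apply, Function.iterate_zero_apply, ← hy, ← hz]
      rw [hpeel]
      have hxy : |y| * |x| ≤ cconst a b := by
        rw [← abs_mul, mul_comm]
        exact le_trans (pair_bound ha1 ha hb hab hax hneg) (le_max_left _ _)
      have hprodnn : (0:ℝ) ≤ ∏ k ∈ Finset.range M, |(fhat a b)^[k] z| :=
        Finset.prod_nonneg fun _ _ => abs_nonneg _
      calc (∏ k ∈ Finset.range M, |(fhat a b)^[k] z|) * (|y| * |x|)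
          ≤ (cconst a b)^(M/2) * cconst a b :=
            mul_le_mul hrec hxy (by positivity) (by positivity)
        _ = (cconst a b)^(M/2 + 1) := by rw [pow_succ]
        _ ≤ (cconst a b)^((M+2)/2) := by
            apply pow_le_pow_of_le_one hc0 hc1; omega
    · -- x > 0 : one step
      set y := fhat a b x with hy
      obtain ⟨_, _, _, hy1, hy2⟩ := branch_pos ha1 ha hb hab hpos hxb
      have hyorb : ∀ k < M+1, (fhat a b)^[k] y ≠ 0 := by
        intro k hk
        have := horb (k+1) (by omega)
        rwa [Function.iterate_succ_apply] at this
      have hrec := IH (M+1) (by omega) y hy1 hy2 hyorb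
      have hpeel : ∏ k ∈ Finset.range (M+2), |(fhat a b)^[k] x|
          = (∏ k ∈ Finset.range (M+1), |(fhat a b)^[k] y|) * |x| := by
        rw [prod_peel]
        simp only [Function.iterate_zero_apply, Function.iterate_succ_apply, ← hy]
      rw [hpeel]
      have hxc : |x| ≤ cconst a b := by
        rw [abs_of_pos hpos]
        exact le_trans (by linarith) (le_max_right _ _)
      have hprodnn : (0:ℝ) ≤ ∏ k ∈ Finset.range (M+1), |(fhat a b)^[k] y| :=
        Finset.prod_nonneg fun _ _ => abs_nonneg _
      calc (∏ k ∈ Finset.range (M+1), |(fhat a b)^[k] y|) * |x|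
          ≤ (cconst a b)^((M+1)/2) * cconst a b :=
            mul_le_mul hrec hxc (abs_nonneg _) (by positivity)
        _ = (cconst a b)^((M+1)/2 + 1) := by rw [pow_succ]
        _ ≤ (cconst a b)^((M+2)/2) := by
            apply pow_le_pow_of_le_one hc0 hc1; omega
lemma GB (ha1 : -1 ≤ a) (ha : a < 0) (hb : 1 ≤ b) (hab : -(a*b) ≤ 1)
    {N : ℕ} (hN : 2 ≤ N) {x : ℝ} (hax : a < x) (hxb : x < b)
    (horb : ∀ k < N, (fhat a b)^[k] x ≠ 0) :
    ∏ k ∈ Finset.range N, |(fhat a b)^[k] x| ≤ b^2 * (cconst a b) ^ ((N-2) / 2) := by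
  have hc0 : 0 ≤ cconst a b := le_of_lt (cconst_pos hb)
  have hc1 : cconst a b ≤ 1 := le_of_lt (cconst_lt_one ha hb)
  have hb2 : (1:ℝ) ≤ b^2 := by nlinarith
  rcases lt_or_ge x (a+1) with hcase | hcase
  · calc ∏ k ∈ Finset.range N, |(fhat a b)^[k] x| ≤ (cconst a b) ^ (N/2) :=
        CM ha1 ha hb hab N x (le_of_lt hax) hcase horb
      _ ≤ (cconst a b) ^ ((N-2)/2) := pow_le_pow_of_le_one hc0 hc1 (by omega)
      _ ≤ b^2 * (cconst a b) ^ ((N-2)/2) := le_mul_of_one_le_left (by positivity) hb2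
  · -- x ≥ a + 1, so x > 0
    have hx0 : x ≠ 0 := by simpa using horb 0 (by omega)
    have hxpos : 0 < x := lt_of_le_of_ne (by linarith) (Ne.symm hx0)
    set y := fhat a b x with hy
    obtain ⟨_, _, _, hy1, hy2⟩ := branch_pos ha1 ha hb hab hxpos hxb
    obtain ⟨M, rfl⟩ : ∃ M, N = M + 1 := ⟨N-1, by omega⟩
    have hyorb : ∀ k < M, (fhat a b)^[k] y ≠ 0 := by
      intro k hk
      have := horb (k+1) (by omega)
      rwa [Function.iterate_succ_apply] at this
    have hrec := CM ha1 ha hb hab M y hy1 hy2 hyorb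
    have hpeel : ∏ k ∈ Finset.range (M+1), |(fhat a b)^[k] x|
        = (∏ k ∈ Finset.range M, |(fhat a b)^[k] y|) * |x| := by
      rw [Finset.prod_range_succ']
      simp only [Function.iterate_zero_apply, Function.iterate_succ_apply, ← hy]
    rw [hpeel]
    have hxB : |x| ≤ b := by rw [abs_of_pos hxpos]; linarith
    calc (∏ k ∈ Finset.range M, |(fhat a b)^[k] y|) * |x|
        ≤ (cconst a b)^(M/2) * b :=
          mul_le_mul hrec hxB (abs_nonneg _) (by positivity)
      _ ≤ (cconst a b)^((M+1-2)/2) * b :=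
          mul_le_mul_of_nonneg_right (pow_le_pow_of_le_one hc0 hc1 (by omega)) (by linarith)
      _ ≤ b^2 * (cconst a b)^((M+1-2)/2) := by
          rw [mul_comm]
          apply mul_le_mul_of_nonneg_right _ (by positivity)
          nlinarith
/-- genFloor is constant on a right-interval of any point. -/
lemma gf_right_const (hba : a < b) (y : ℝ) :
    ∃ ε > 0, ∀ z, y ≤ z → z < y + ε → genFloor a b z = genFloor a b y := by
  refine ⟨min ((⌊y - a⌋ + 1) - (y - a)) ((⌊y - b⌋ + 1) - (y - b)), ?_, ?_⟩
  · apply lt_min <;> · push_cast; nlinarith [Int.lt_floor_add_one (y - a), Int.lt_floor_add_one (y - b)]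
  · intro z hz1 hz2
    have h2a : z < y + ((⌊y - a⌋ + 1) - (y - a)) := lt_of_lt_of_le hz2 ((add_le_add_iff_left y).2 (min_le_left _ _))
    have h2b : z < y + ((⌊y - b⌋ + 1) - (y - b)) := lt_of_lt_of_le hz2 ((add_le_add_iff_left y).2 (min_le_right _ _))
    have hfa : ⌊z - a⌋ = ⌊y - a⌋ := by
      rw [Int.floor_eq_iff]
      constructor
      · have := Int.floor_le (y - a); linarith
      · push_cast; push_cast at h2a; linarith
    have hfb : ⌊z - b⌋ = ⌊y - b⌋ := by
      rw [Int.floor_eq_iff]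
      constructor
      · have := Int.floor_le (y - b); linarith
      · push_cast; push_cast at h2b; linarith
    rcases lt_or_ge y a with hya | hya
    · have hfla : ⌊y - a⌋ < 0 := Int.floor_lt.2 (by push_cast; linarith)
      have hza : z < a := by
        have : (⌊y - a⌋:ℝ) + 1 ≤ 0 := by exact_mod_cast Int.add_one_le_of_lt hfla
        linarith [h2a]
      simp [genFloor, hza, hya, hfa]
    · rcases lt_or_ge y b with hyb | hyb
      · have hflb : ⌊y - b⌋ < 0 := Int.floor_lt.2 (by push_cast; linarith)
        have hzb : z < b := by
          have : (⌊y - b⌋:ℝ) + 1 ≤ 0 := by exact_mod_cast Int.add_one_le_of_lt hflb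
          linarith [h2b]
        have hza : a ≤ z := le_trans hya hz1
        simp [genFloor, not_lt.2 hza, not_lt.2 hya, hzb, hyb]
      · have hzb : b ≤ z := le_trans hyb hz1
        have hza : a ≤ z := le_trans (le_of_lt hba) hzb
        have hya' : a ≤ y := le_trans (le_of_lt hba) hyb
        simp [genFloor, not_lt.2 hza, not_lt.2 hya', not_lt.2 hzb, not_lt.2 hyb, hfb]

def good1 (a b t : ℝ) : Prop :=
  t ≠ 0 ∧ ∀ᶠ y in nhds (-1/t), genFloor a b y = genFloor a b (-1/t)

lemma fhat_hasDeriv (hg : good1 a b t) : HasDerivAt (fhat a b) ((t^2)⁻¹) t := by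
  obtain ⟨ht0, hev⟩ := hg
  have hcont : ContinuousAt (fun s : ℝ => -1/s) t := by
    exact ContinuousAt.div continuousAt_const continuousAt_id ht0
  have hev2 : ∀ᶠ s in nhds t, genFloor a b (-1/s) = genFloor a b (-1/t) :=
    hcont.eventually hev
  have hne : ∀ᶠ s in nhds t, s ≠ 0 := eventually_ne_nhds ht0
  have heq : ∀ᶠ s in nhds t, fhat a b s = -1/s - (genFloor a b (-1/t) : ℝ) := by
    filter_upwards [hev2, hne] with s h1 h2
    rw [fhat_ne h2, h1]
  have hD : HasDerivAt (fun s : ℝ => -1/s - (genFloor a b (-1/t) : ℝ)) ((t^2)⁻¹) t := by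
    have h1 : HasDerivAt (fun s : ℝ => s⁻¹) (-(t^2)⁻¹) t := hasDerivAt_inv ht0
    have h2 := (h1.neg).sub_const ((genFloor a b (-1/t) : ℝ))
    simp only [neg_neg] at h2
    have hfe : (fun s : ℝ => -1/s - (genFloor a b (-1/t) : ℝ))
        = fun s : ℝ => -(s⁻¹) - (genFloor a b (-1/t) : ℝ) := by
      funext s; rw [neg_div, one_div]
    rw [hfe]
    exact h2
  exact hD.congr_of_eventuallyEq heq

lemma iterate_hasDeriv (N : ℕ) (t : ℝ) (hg : ∀ k < N, good1 a b ((fhat a b)^[k] t)) :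
    HasDerivAt ((fhat a b)^[N])
      (∏ k ∈ Finset.range N, (((fhat a b)^[k] t)^2)⁻¹) t := by
  induction N generalizing t with
  | zero => simpa using hasDerivAt_id t
  | succ M IH =>
    have h0 : good1 a b t := by simpa using hg 0 (by omega)
    have h1 : HasDerivAt (fhat a b) ((t^2)⁻¹) t := fhat_hasDeriv h0
    have hshift : ∀ k < M, good1 a b ((fhat a b)^[k] (fhat a b t)) := by
      intro k hk
      have := hg (k+1) (by omega)
      rwa [Function.iterate_succ_apply] at this
    have h2 := IH (fhat a b t) hshift
    have h3 := h2.comp t h1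
    rw [← Function.iterate_succ] at h3
    refine h3.congr_deriv ?_
    rw [Finset.prod_range_succ']
    simp only [Function.iterate_zero_apply, Function.iterate_succ_apply]
lemma RB (hba : a < b) {x : ℝ} (hx : x ≠ 0) :
    ∃ δ > 0,
      (∀ s, x ≤ s → s < x + δ →
        s ≠ 0 ∧ fhat a b s = -1/s - (genFloor a b (-1/x) : ℝ)) ∧
      (∀ s t, x ≤ s → s < t → t < x + δ → -1/s < -1/t) ∧
      (∀ s, x < s → s < x + δ → good1 a b s) := by
  obtain ⟨ε, hε, hconst⟩ := gf_right_const hba (-1/x)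
  set δ := if 0 < x then ε * x^2 else min (-x/2) (ε * x^2 / 2) with hδ
  have hδpos : 0 < δ := by
    rw [hδ]; split
    · positivity
    · rename_i h
      have hxneg : x < 0 := lt_of_le_of_ne (not_lt.1 h) hx
      apply lt_min (by linarith) (by positivity)
  have hsign : ∀ s, x ≤ s → s < x + δ → (0 < s ∧ 0 < x) ∨ (s < 0 ∧ x < 0) := by
    intro s h1 h2
    rcases lt_or_gt_of_ne hx with hneg | hpos
    · right
      refine ⟨?_, hneg⟩
      have : δ ≤ -x/2 := by rw [hδ, if_neg (not_lt.2 (le_of_lt hneg))]; exact min_le_left _ _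
      linarith
    · left; exact ⟨lt_of_lt_of_le hpos h1, hpos⟩
  have hrange : ∀ s, x ≤ s → s < x + δ → -1/x ≤ -1/s ∧ -1/s < -1/x + ε := by
    intro s h1 h2
    have hs0 : s ≠ 0 := by rcases hsign s h1 h2 with ⟨h, _⟩ | ⟨h, _⟩ <;> [exact ne_of_gt h; exact ne_of_lt h]
    have hxs : 0 < x * s := by
      rcases hsign s h1 h2 with ⟨h, h'⟩ | ⟨h, h'⟩
      · exact mul_pos h' h
      · exact mul_pos_of_neg_of_neg h' h
    have hdiff : -1/s - (-1/x) = (s - x)/(x*s) := by field_simp; ring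
    constructor
    · have : 0 ≤ (s - x)/(x*s) := div_nonneg (by linarith) (le_of_lt hxs)
      linarith
    · have hlt : (s - x)/(x*s) < ε := by
        rw [div_lt_iff₀ hxs]
        rcases hsign s h1 h2 with ⟨hs, hx'⟩ | ⟨hs, hx'⟩
        · have hδ' : δ = ε * x^2 := by rw [hδ, if_pos hx']
          nlinarith
        · have hδ1 : δ ≤ -x/2 := by rw [hδ, if_neg (not_lt.2 (le_of_lt hx'))]; exact min_le_left _ _
          have hδ2 : δ ≤ ε * x^2 / 2 := by rw [hδ, if_neg (not_lt.2 (le_of_lt hx'))]; exact min_le_right _ _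
          nlinarith
      linarith
  have hmono : ∀ s t, x ≤ s → s < t → t < x + δ → -1/s < -1/t := by
    intro s t h1 h2 h3
    have hss := hsign s h1 (by linarith)
    have hts := hsign t (by linarith) h3
    have hst : 0 < s * t := by
      rcases hss with ⟨h, _⟩ | ⟨h, _⟩ <;> rcases hts with ⟨h', _⟩ | ⟨h', _⟩
      · exact mul_pos h h'
      · linarith
      · linarith
      · exact mul_pos_of_neg_of_neg h h'
    have hs0 : s ≠ 0 := by rcases hss with ⟨h, _⟩ | ⟨h, _⟩ <;> [exact ne_of_gt h; exact ne_of_lt h]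
    have ht0 : t ≠ 0 := by rcases hts with ⟨h, _⟩ | ⟨h, _⟩ <;> [exact ne_of_gt h; exact ne_of_lt h]
    have hdiff : -1/t - (-1/s) = (t - s)/(s*t) := by field_simp; ring
    have : 0 < (t - s)/(s*t) := div_pos (by linarith) hst
    linarith
  refine ⟨δ, hδpos, ?_, hmono, ?_⟩
  · intro s h1 h2
    have hs0 : s ≠ 0 := by rcases hsign s h1 h2 with ⟨h, _⟩ | ⟨h, _⟩ <;> [exact ne_of_gt h; exact ne_of_lt h]
    obtain ⟨hr1, hr2⟩ := hrange s h1 h2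
    refine ⟨hs0, ?_⟩
    rw [fhat_ne hs0, hconst (-1/s) hr1 hr2]
  · intro s h1 h2
    have hs0 : s ≠ 0 := by
      rcases hsign s (le_of_lt h1) h2 with ⟨h, _⟩ | ⟨h, _⟩ <;> [exact ne_of_gt h; exact ne_of_lt h]
    refine ⟨hs0, ?_⟩
    have hlow : -1/x < -1/s := hmono x s le_rfl h1 h2
    have hup : -1/s < -1/x + ε := (hrange s (le_of_lt h1) h2).2
    have hmem : -1/s ∈ Ioo (-1/x) (-1/x + ε) := ⟨hlow, hup⟩
    have hnb : Ioo (-1/x) (-1/x + ε) ∈ nhds (-1/s) := isOpen_Ioo.mem_nhds hmem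
    filter_upwards [hnb] with w hw
    rw [hconst w (le_of_lt hw.1) hw.2, hconst (-1/s) (le_of_lt hlow) hup]

lemma RG (ha1 : -1 ≤ a) (ha : a < 0) (hb : 1 ≤ b) (hab : -(a*b) ≤ 1) :
    ∀ N : ℕ, ∀ x : ℝ, x ∈ Ico a b → (∀ k < N, (fhat a b)^[k] x ≠ 0) →
    ∃ δ > 0, x + δ ≤ b ∧
      ∀ t, x < t → t < x + δ → ∀ k < N, good1 a b ((fhat a b)^[k] t) := by
  intro N
  induction N with
  | zero =>
    intro x hx _
    exact ⟨b - x, by linarith [hx.2], by linarith, fun t _ _ k hk => absurd hk (by omega)⟩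
  | succ M IH =>
    intro x hx horb
    have hba : a < b := by linarith
    have hx0 : x ≠ 0 := by simpa using horb 0 (by omega)
    obtain ⟨δ₀, hδ₀, hbr, hmono, hgood⟩ := RB hba hx0
    set n := genFloor a b (-1/x) with hn
    set x' := fhat a b x with hx'
    have hx'mem : x' ∈ Ico a b := fhat_mem ha1 ha hb hab hx
    have hx'orb : ∀ k < M, (fhat a b)^[k] x' ≠ 0 := by
      intro k hk
      have := horb (k+1) (by omega)
      rwa [Function.iterate_succ_apply] at this
    obtain ⟨δ', hδ', hδ'b, hgood'⟩ := IH x' hx'mem hx'orb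
    have hcont : ContinuousAt (fun s : ℝ => -1/s - (n:ℝ)) x :=
      (ContinuousAt.div continuousAt_const continuousAt_id hx0).sub continuousAt_const
    obtain ⟨r, hr, hrprop⟩ := Metric.continuousAt_iff.1 hcont δ' hδ'
    set δ := min (min δ₀ r) (b - x) with hδdef
    have hδpos : 0 < δ := by
      apply lt_min (lt_min hδ₀ hr); linarith [hx.2]
    refine ⟨δ, hδpos, by linarith [min_le_right (min δ₀ r) (b - x)], ?_⟩
    intro t ht1 ht2 k hk
    have htδ₀ : t < x + δ₀ := by
      have : δ ≤ δ₀ := le_trans (min_le_left _ _) (min_le_left _ _)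
      linarith
    match k with
    | 0 =>
      simpa using hgood t ht1 htδ₀
    | (k+1) =>
      rw [Function.iterate_succ_apply]
      obtain ⟨ht0, htbr⟩ := hbr t (le_of_lt ht1) htδ₀
      have hx'eq : x' = -1/x - (n:ℝ) := by
        rw [hx', fhat_ne hx0, hn]
      have hft_gt : x' < fhat a b t := by
        rw [htbr, hx'eq]
        have := hmono x t le_rfl ht1 htδ₀
        linarith
      have hft_lt : fhat a b t < x' + δ' := by
        have hdist : dist t x < r := by
          rw [Real.dist_eq, abs_of_pos (by linarith)]
          have : δ ≤ r := le_trans (min_le_left _ _) (min_le_right _ _)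
          linarith
        have := hrprop hdist
        rw [Real.dist_eq] at this
        have heq1 : -1/t - (n:ℝ) = fhat a b t := htbr.symm
        have heq2 : -1/x - (n:ℝ) = x' := hx'eq.symm
        simp only [heq1, heq2] at this
        have := abs_lt.1 this
        linarith [this.2]
      exact hgood' (fhat a b t) hft_gt hft_lt k (by omega)
lemma iterate_zero_fixed (m : ℕ) : (fhat a b)^[m] 0 = 0 := by
  induction m with
  | zero => rfl
  | succ k ih => rw [Function.iterate_succ_apply', ih, fhat_zero]

lemma fiber_countable (s : ℝ) : {t : ℝ | fhat a b t = s}.Countable := by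
  have hsub : {t : ℝ | fhat a b t = s} ⊆
      insert 0 (Set.range (fun n : ℤ => -1/(s + (n:ℝ)))) := by
    intro t ht
    rcases eq_or_ne t 0 with h | h
    · exact Or.inl h
    · right
      refine ⟨genFloor a b (-1/t), ?_⟩
      simp only [mem_setOf_eq] at ht
      rw [fhat_ne h] at ht
      have h2 : s + (genFloor a b (-1/t) : ℝ) = -1/t := by linarith
      show -1/(s + (genFloor a b (-1/t) : ℝ)) = t
      rw [h2]
      field_simp
  exact Set.Countable.mono hsub ((Set.countable_range _).insert 0)

lemma zero_set_countable (m : ℕ) : {t : ℝ | (fhat a b)^[m] t = 0}.Countable := by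
  induction m with
  | zero => simpa using Set.countable_singleton (0:ℝ)
  | succ k ih =>
    have : {t : ℝ | (fhat a b)^[k+1] t = 0}
        = ⋃ s ∈ {u : ℝ | (fhat a b)^[k] u = 0}, {t : ℝ | fhat a b t = s} := by
      ext t
      simp only [mem_setOf_eq, mem_iUnion, exists_prop, Function.iterate_succ_apply]
      constructor
      · intro h; exact ⟨fhat a b t, h, rfl⟩
      · rintro ⟨s, hs, rfl⟩; exact hs
    rw [this]
    exact Set.Countable.biUnion ih (fun s _ => fiber_countable s)

lemma exists_good_target (ha : a < 0) (m : ℕ) :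
    ∃ v, a ≤ v ∧ v < a + 1 ∧ (fhat a b)^[m] v ≠ 0 := by
  by_contra h
  push_neg at h
  have hsub : Ico a (a+1) ⊆ {t : ℝ | (fhat a b)^[m] t = 0} := by
    intro v hv; exact h v hv.1 hv.2
  have h1 := measure_mono (μ := volume) hsub
  rw [(zero_set_countable m).measure_zero volume] at h1
  simp [Real.volume_Ico] at h1
lemma ZD_zero (ha : a < 0) (M : ℕ) :
    ¬ContinuousWithinAt ((fhat a b)^[M+1]) (Ioi (0:ℝ)) 0 := by
  obtain ⟨v, hv1, hv2, hvM⟩ := exists_good_target ha M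
  have hv3 : v < 1 := by linarith
  set t : ℕ → ℝ := fun j => ((j:ℝ) + 1 - v)⁻¹ with ht
  have hd : ∀ j : ℕ, 0 < (j:ℝ) + 1 - v := by
    intro j
    have : (0:ℝ) ≤ j := Nat.cast_nonneg j
    linarith
  have htpos : ∀ j, 0 < t j := fun j => inv_pos.2 (hd j)
  have hinv : ∀ j : ℕ, -1 / t j = v - ((j:ℝ) + 1) := by
    intro j
    rw [ht]
    field_simp
    ring
  have hfv : ∀ j, fhat a b (t j) = v := by
    intro j
    rw [fhat_ne (ne_of_gt (htpos j)), hinv j]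
    have hlta : v - ((j:ℝ)+1) < a := by
      have : (0:ℝ) ≤ j := Nat.cast_nonneg j
      linarith
    rw [gf_neg hlta]
    have hcast : v - ((j:ℝ)+1) - a = (v - a) - ((j+1 : ℕ) : ℝ) := by push_cast; ring
    rw [hcast, Int.floor_sub_natCast]
    have h0 : ⌊v - a⌋ = 0 := Int.floor_eq_zero_iff.2 ⟨by linarith, by linarith⟩
    rw [h0]
    push_cast
    ring
  have hfix : ∀ j, (fhat a b)^[M+1] (t j) = (fhat a b)^[M] v := by
    intro j
    rw [Function.iterate_succ_apply, hfv j]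
  have htt : Tendsto t atTop (nhdsWithin 0 (Ioi (0:ℝ))) := by
    apply tendsto_nhdsWithin_of_tendsto_nhds_of_eventually_within
    · have h1 : Tendsto (fun j : ℕ => (j:ℝ) + 1 - v) atTop atTop := by
        have h2 := tendsto_atTop_add_const_right atTop (1 - v)
          (tendsto_natCast_atTop_atTop (R := ℝ))
        have : (fun j : ℕ => (j:ℝ) + 1 - v) = (fun j : ℕ => (j:ℝ) + (1 - v)) := by
          funext j; ring
        rw [this]
        exact h2
      exact h1.inv_tendsto_atTop
    · exact Eventually.of_forall fun j => htpos j
  intro hC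
  have h2 : Tendsto ((fhat a b)^[M+1] ∘ t) atTop (nhds ((fhat a b)^[M+1] 0)) :=
    hC.tendsto.comp htt
  have h3 : ((fhat a b)^[M+1] ∘ t) = fun _ => (fhat a b)^[M] v := funext fun j => hfix j
  rw [h3, iterate_zero_fixed (M+1)] at h2
  exact hvM (tendsto_nhds_unique tendsto_const_nhds h2)

lemma ZD (ha1 : -1 ≤ a) (ha : a < 0) (hb : 1 ≤ b) (hab : -(a*b) ≤ 1) :
    ∀ K : ℕ, ∀ N : ℕ, ∀ x : ℝ, x ∈ Ico a b → K < N →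
    (fhat a b)^[K] x = 0 → (∀ j < K, (fhat a b)^[j] x ≠ 0) →
    ¬ContinuousWithinAt ((fhat a b)^[N]) (Ioi x) x := by
  intro K
  induction K with
  | zero =>
    intro N x _ hKN h0 _
    simp only [Function.iterate_zero_apply] at h0
    subst h0
    obtain ⟨M, rfl⟩ : ∃ M, N = M + 1 := ⟨N-1, by omega⟩
    exact ZD_zero ha M
  | succ K IH =>
    intro N x hx hKN h0 hprev
    have hba : a < b := by linarith
    have hx0 : x ≠ 0 := by simpa using hprev 0 (by omega)
    obtain ⟨δ₀, hδ₀, hbr, hmono, _⟩ := RB hba hx0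
    set n := genFloor a b (-1/x) with hn
    set x' := fhat a b x with hx'
    have hx'mem : x' ∈ Ico a b := fhat_mem ha1 ha hb hab hx
    obtain ⟨M, rfl⟩ : ∃ M, N = M + 1 := ⟨N-1, by omega⟩
    have hIH := IH M x' hx'mem (by omega)
      (by rw [hx', ← Function.iterate_succ_apply]; exact h0)
      (by
        intro j hj
        have := hprev (j+1) (by omega)
        rwa [Function.iterate_succ_apply] at this)
    intro hC
    apply hIH
    -- build continuity of f^[M] at x' within Ioi x' from hC via θ
    set θ : ℝ → ℝ := fun u => -1/(u + (n:ℝ)) with hθ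
    have hx'n : x' + (n:ℝ) = -1/x := by
      rw [hx', fhat_ne hx0, hn]; ring
    have hx'n0 : x' + (n:ℝ) ≠ 0 := by
      rw [hx'n]
      simp [hx0]
    have hθx' : θ x' = x := by
      rw [hθ]
      simp only
      rw [hx'n]
      field_simp
    have hθcont : ContinuousAt θ x' := by
      apply ContinuousAt.div continuousAt_const
      · exact continuousAt_id.add continuousAt_const
      · exact hx'n0
    -- monotone: for u > x' near x', θ u > x
    have hθmono : ∀ u, x' < u → u < x' + |x' + (n:ℝ)|/2 → x < θ u := by
      intro u hu1 hu2
      have habs : |x' + (n:ℝ)| > 0 := abs_pos.2 hx'n0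
      have hsign : 0 < (x' + (n:ℝ)) * (u + (n:ℝ)) := by
        rcases lt_or_gt_of_ne hx'n0 with hneg | hpos
        · have habs' : |x' + (n:ℝ)| = -(x' + (n:ℝ)) := abs_of_neg hneg
          have : u + (n:ℝ) < (x' + (n:ℝ))/2 := by rw [habs'] at hu2; linarith
          apply mul_pos_of_neg_of_neg hneg (by linarith)
        · apply mul_pos hpos (by linarith)
      have hdiff : θ u - θ x' = (u - x')/((x' + (n:ℝ)) * (u + (n:ℝ))) := by
        rw [hθ]
        simp only
        have h1 : u + (n:ℝ) ≠ 0 := by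
          intro h
          rw [h, mul_zero] at hsign
          exact lt_irrefl 0 hsign
        field_simp
        ring
      have : 0 < θ u - θ x' := by
        rw [hdiff]
        exact div_pos (by linarith) hsign
      rw [hθx'] at this
      linarith
    -- continuity: pick ε' so that θ maps (x', x'+ε') into (x, x+δ₀)
    obtain ⟨r, hr, hrprop⟩ := Metric.continuousAt_iff.1 hθcont δ₀ hδ₀
    set ε' := min r (|x' + (n:ℝ)|/2) with hε'
    have hε'pos : 0 < ε' := lt_min hr (by positivity)
    have hθmaps : ∀ u, x' < u → u < x' + ε' → x < θ u ∧ θ u < x + δ₀ := by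
      intro u hu1 hu2
      constructor
      · exact hθmono u hu1 (by
          have : ε' ≤ |x' + (n:ℝ)|/2 := min_le_right _ _
          linarith)
      · have hdist : dist u x' < r := by
          rw [Real.dist_eq, abs_of_pos (by linarith)]
          have : ε' ≤ r := min_le_left _ _
          linarith
        have := hrprop hdist
        rw [Real.dist_eq, hθx'] at this
        linarith [(abs_lt.1 this).2]
    -- on (x', x'+ε'), f^[M] u = f^[M+1] (θ u)
    have hkey : ∀ u, x' < u → u < x' + ε' →
        (fhat a b)^[M] u = (fhat a b)^[M+1] (θ u) := by
      intro u hu1 hu2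
      obtain ⟨hθ1, hθ2⟩ := hθmaps u hu1 hu2
      have h1 : u + (n:ℝ) ≠ 0 := by
        rcases lt_or_gt_of_ne hx'n0 with hneg | hpos
        · have habs' : |x' + (n:ℝ)| = -(x' + (n:ℝ)) := abs_of_neg hneg
          have hle : ε' ≤ |x' + (n:ℝ)|/2 := min_le_right _ _
          intro hz
          rw [habs'] at hle
          linarith
        · intro hz
          linarith
      obtain ⟨_, hbrθ⟩ := hbr (θ u) (le_of_lt hθ1) hθ2
      have : fhat a b (θ u) = u := by
        rw [hbrθ, hθ]
        simp only
        field_simp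
        ring
      rw [Function.iterate_succ_apply, this]
    -- conclude
    have htendθ : Tendsto θ (nhdsWithin x' (Ioo x' (x' + ε'))) (nhdsWithin x (Ioi x)) := by
      apply tendsto_nhdsWithin_of_tendsto_nhds_of_eventually_within
      · rw [← hθx']
        exact hθcont.continuousWithinAt.tendsto
      · filter_upwards [self_mem_nhdsWithin] with u hu
        exact (hθmaps u hu.1 hu.2).1
    have hcomp : Tendsto ((fhat a b)^[M+1] ∘ θ) (nhdsWithin x' (Ioo x' (x' + ε')))
        (nhds ((fhat a b)^[M+1] x)) := hC.tendsto.comp htendθ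
    have hcongr : Tendsto ((fhat a b)^[M]) (nhdsWithin x' (Ioo x' (x' + ε')))
        (nhds ((fhat a b)^[M] x')) := by
      have hval : (fhat a b)^[M+1] x = (fhat a b)^[M] x' := by
        rw [Function.iterate_succ_apply, ← hx']
      rw [← hval]
      apply hcomp.congr'
      filter_upwards [self_mem_nhdsWithin] with u hu
      exact (hkey u hu.1 hu.2).symm
    -- upgrade from Ioo to Ioi
    have : nhdsWithin x' (Ioo x' (x' + ε')) = nhdsWithin x' (Ioi x') := by
      rw [← nhdsWithin_Ioo_eq_nhdsGT (by linarith : x' < x' + ε')]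
    rw [this] at hcongr
    exact hcongr
end ExpHelpers

theorem stmt15 (a b : ℝ) (hP : memP a b) (ha1 : -1 ≤ a) (ha : a < 0) (hb : 1 ≤ b) :
    ∃ (N : ℕ) (γ : ℝ), 1 ≤ N ∧ 1 < γ ∧
      ∀ x ∈ Set.Ioo a b, DifferentiableAt ℝ ((fhat a b)^[N]) x →
        γ ≤ |deriv ((fhat a b)^[N]) x| := by
  classical
  obtain ⟨ha0, hb0, hba1, hab⟩ := hP
  have hc1 : cconst a b < 1 := cconst_lt_one ha hb
  have hc0 : 0 < cconst a b := cconst_pos hb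
  obtain ⟨m, hm⟩ := exists_pow_lt_of_lt_one
    (show (0:ℝ) < 1/(2*b^2) by positivity) hc1
  set N := 2*m + 2 with hN
  refine ⟨N, 4, by omega, by norm_num, ?_⟩
  intro x hx hdiff
  -- prodbound : key bound for all-nonzero orbits
  have hBhalf : b^2 * (cconst a b)^m ≤ 1/2 := by
    have hb2 : (0:ℝ) < b^2 := by positivity
    rw [lt_div_iff₀ (by positivity : (0:ℝ) < 2*b^2)] at hm
    nlinarith [pow_nonneg (le_of_lt hc0) m]
  by_cases hzero : ∃ k, k < N ∧ (fhat a b)^[k] x = 0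
  · -- orbit hits zero: not even continuous, contradiction with differentiability
    exfalso
    obtain ⟨k0, hk0N, hk00⟩ := hzero
    have hex : ∃ k, (fhat a b)^[k] x = 0 := ⟨k0, hk00⟩
    have hKN : Nat.find hex < N := lt_of_le_of_lt (Nat.find_min' hex hk00) hk0N
    exact ZD ha1 ha hb hab (Nat.find hex) N x ⟨le_of_lt hx.1, hx.2⟩ hKN
      (Nat.find_spec hex) (fun j hj => Nat.find_min hex hj)
      hdiff.continuousAt.continuousWithinAt
  · push_neg at hzero
    obtain ⟨δ, hδpos, hδb, hgood⟩ := RG ha1 ha hb hab N x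
      ⟨le_of_lt hx.1, hx.2⟩ hzero
    -- derivative at good points is at least 4
    have hDbound : ∀ t, x < t → t < x + δ →
        4 ≤ ∏ k ∈ Finset.range N, (((fhat a b)^[k] t)^2)⁻¹ := by
      intro t ht1 ht2
      have htab : a < t ∧ t < b := ⟨lt_trans hx.1 ht1, by linarith⟩
      have htorb : ∀ k < N, (fhat a b)^[k] t ≠ 0 :=
        fun k hk => (hgood t ht1 ht2 k hk).1
      have hPabs := GB ha1 ha hb hab (by omega) htab.1 htab.2 htorb
      have hNm : (N - 2)/2 = m := by omega
      rw [hNm] at hPabs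
      set P := ∏ k ∈ Finset.range N, |(fhat a b)^[k] t| with hP
      have hPpos : 0 < P :=
        Finset.prod_pos fun k hk => abs_pos.2 (htorb k (Finset.mem_range.1 hk))
      have hPhalf : P ≤ 1/2 := le_trans hPabs hBhalf
      have hsq : P^2 = ∏ k ∈ Finset.range N, ((fhat a b)^[k] t)^2 := by
        rw [hP, ← Finset.prod_pow]
        exact Finset.prod_congr rfl (fun k _ => sq_abs _)
      have hprodeq : ∏ k ∈ Finset.range N, (((fhat a b)^[k] t)^2)⁻¹ = (P^2)⁻¹ := by
        rw [hsq]
        exact Finset.prod_inv_distrib _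
      rw [hprodeq]
      have h14 : P^2 ≤ 1/4 := by nlinarith
      have := inv_anti₀ (by positivity : (0:ℝ) < P^2) h14
      norm_num at this
      linarith
    -- slope bound via MVT
    have hslope : ∀ t, x < t → t < x + δ →
        4 ≤ ((fhat a b)^[N] t - (fhat a b)^[N] x) / (t - x) := by
      intro t ht1 ht2
      have hcont : ContinuousOn ((fhat a b)^[N]) (Icc x t) := by
        intro s hs
        rcases eq_or_lt_of_le hs.1 with rfl | hlt
        · exact hdiff.continuousAt.continuousWithinAt
        · exact ((iterate_hasDeriv N s
            (hgood s hlt (by linarith [hs.2]))).differentiableAt).continuousAt.continuousWithinAt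
      have hderiv : ∀ s ∈ Ioo x t, HasDerivAt ((fhat a b)^[N])
          (∏ k ∈ Finset.range N, (((fhat a b)^[k] s)^2)⁻¹) s :=
        fun s hs => iterate_hasDeriv N s (hgood s hs.1 (by linarith [hs.2]))
      obtain ⟨ξ, hξ, hξeq⟩ := exists_hasDerivAt_eq_slope ((fhat a b)^[N]) _ ht1 hcont hderiv
      rw [← hξeq]
      exact hDbound ξ hξ.1 (by linarith [hξ.2])
    -- conclude
    have hder := hdiff.hasDerivAt
    have htend := hasDerivAt_iff_tendsto_slope.1 hder
    have hmono : nhdsWithin x (Ioi x) ≤ nhdsWithin x ({x}ᶜ) :=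
      nhdsWithin_mono x (fun y hy => ne_of_gt hy)
    have htend' := htend.mono_left hmono
    have hev : ∀ᶠ t in nhdsWithin x (Ioi x), 4 ≤ slope ((fhat a b)^[N]) x t := by
      filter_upwards [Ioo_mem_nhdsGT_of_mem (⟨le_refl x, by linarith⟩ : x ∈ Ico x (x+δ))] with t ht
      rw [slope_def_field]
      exact hslope t ht.1 ht.2
    have h4 : 4 ≤ deriv ((fhat a b)^[N]) x := ge_of_tendsto htend' hev
    exact le_trans h4 (le_abs_self _)
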